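/- Let h ∈ ℝ and let γ_1, …, γ_{n+1} be real numbers satisfying the interlacing condition 0 > γ_1 > −θ_1 > γ_2 > −θ_2 > ⋯ > −θ_n > γ_{n+1}. Then the (n+1)×(n+1) real matrix A^{h} whose first row is (e^{γ_1 h}, …, e^{γ_{n+1} h}) and whose (l+1)-th row, for l = 1, …, n, is (e^{γ_1 h}/(θ_l + γ_1), …, e^{γ_{n+1} h}/(θ_l + γ_{n+1})), is nonsingular. -/
import Mathlib


open Real

/-- If `0 > γ₁ > −θ₁ > γ₂ > −θ₂ > ⋯ > −θ_n > γ_{n+1}`, then the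
`(n+1)×(n+1)` matrix whose first row is `(e^{γ_j h})_j` and whose `(l+1)`-th
row is `(e^{γ_j h}/(θ_l + γ_j))_j` is nonsingular. -/
theorem one_sided_exit_matrix_nonsingular_down
    (n : ℕ) (hn : 0 < n)
    (θ : Fin n → ℝ) (hθ0 : 0 < θ ⟨0, hn⟩) (hθmono : StrictMono θ)
    (h : ℝ) (γ : Fin (n + 1) → ℝ)
    (hγ0 : γ 0 < 0)
    (hinter : ∀ k : Fin n, -θ k < γ k.castSucc ∧ γ k.succ < -θ k) :
    (Matrix.of fun i j : Fin (n + 1) =>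
      if _ : (i : ℕ) = 0 then Real.exp (γ j * h)
      else Real.exp (γ j * h) / (θ ⟨(i : ℕ) - 1, by have := i.isLt; omega⟩ + γ j)).det
      ≠ 0 := by
  classical
  intro hdet
  obtain ⟨v, hv0, hmv⟩ := (Matrix.exists_mulVec_eq_zero_iff).mpr hdet
  have hγanti : StrictAnti γ := Fin.strictAnti_iff_succ_lt.mpr fun k =>
    (hinter k).2.trans (hinter k).1
  have hγinj : Function.Injective γ := hγanti.injective
  have hne : ∀ (l : Fin n) (j : Fin (n + 1)), θ l + γ j ≠ 0 := by
    intro l j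
    rcases le_or_gt (j : ℕ) (l : ℕ) with hle | hlt
    · have h1 : γ l.castSucc ≤ γ j := hγanti.antitone (by simpa [Fin.le_def] using hle)
      have h2 := (hinter l).1
      intro hc; linarith
    · have h1 : γ j ≤ γ l.succ := hγanti.antitone (by simp [Fin.le_def]; omega)
      have h2 := (hinter l).2
      intro hc; linarith
  set d : Fin (n + 1) → ℝ := fun j => v j * Real.exp (γ j * h) with hd
  -- row equations
  have row0 : ∑ j, d j = 0 := by
    have h0 := congrFun hmv 0
    simp only [Matrix.mulVec, dotProduct, Matrix.of_apply, Pi.zero_apply] at h0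
    simpa [hd, mul_comm] using h0
  have hrow : ∀ l : Fin n, ∑ j, Real.exp (γ j * h) / (θ l + γ j) * v j = 0 := by
    intro l
    have hl := congrFun hmv l.succ
    simp only [Matrix.mulVec, dotProduct, Matrix.of_apply, Pi.zero_apply] at hl
    simpa using hl
  set P : Polynomial ℝ :=
    ∑ j, Polynomial.C (d j) * ∏ k ∈ Finset.univ.erase j, (Polynomial.X + Polynomial.C (γ k))
    with hP
  have hPeval : ∀ x : ℝ, P.eval x = ∑ j, d j * ∏ k ∈ Finset.univ.erase j, (x + γ k) := by
    intro x
    simp [hP, Polynomial.eval_finset_sum, Polynomial.eval_prod]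
  have hcard : ∀ j : Fin (n + 1), (Finset.univ.erase j).card = n := by
    intro j
    simp [Finset.card_erase_of_mem]
  have hmonic : ∀ j : Fin (n + 1),
      (∏ k ∈ Finset.univ.erase j, (Polynomial.X + Polynomial.C (γ k))).Monic :=
    fun j => Polynomial.monic_prod_of_monic _ _ fun k _ => Polynomial.monic_X_add_C _
  have hproddeg : ∀ j : Fin (n + 1),
      (∏ k ∈ Finset.univ.erase j, (Polynomial.X + Polynomial.C (γ k))).natDegree = n := by
    intro j
    rw [Polynomial.natDegree_prod _ _ fun k _ => (Polynomial.monic_X_add_C _).ne_zero]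
    simp [Polynomial.natDegree_X_add_C, hcard j]
  have hdeg : P.natDegree ≤ n := by
    refine Polynomial.natDegree_sum_le_of_forall_le _ _ fun j _ => ?_
    calc (Polynomial.C (d j) * ∏ k ∈ Finset.univ.erase j,
            (Polynomial.X + Polynomial.C (γ k))).natDegree
        ≤ (∏ k ∈ Finset.univ.erase j,
            (Polynomial.X + Polynomial.C (γ k))).natDegree := Polynomial.natDegree_C_mul_le _ _
      _ = n := hproddeg j
  have hcoeffn : P.coeff n = 0 := by
    rw [hP, Polynomial.finset_sum_coeff]
    have : ∀ j : Fin (n + 1), (Polynomial.C (d j) * ∏ k ∈ Finset.univ.erase j,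
        (Polynomial.X + Polynomial.C (γ k))).coeff n = d j := by
      intro j
      rw [Polynomial.coeff_C_mul]
      have := (hmonic j).coeff_natDegree
      rw [hproddeg j] at this
      rw [this, mul_one]
    rw [Finset.sum_congr rfl fun j _ => this j]
    exact row0
  have hP0 : P = 0 := by
    by_cases hdn : P.natDegree = n
    · have hl : P.leadingCoeff = 0 := by
        rw [Polynomial.leadingCoeff, hdn]; exact hcoeffn
      exact Polynomial.leadingCoeff_eq_zero.mp hl
    · refine Polynomial.eq_zero_of_natDegree_lt_card_of_eval_eq_zero P hθmono.injective
        (fun l => ?_) (by simpa [Fintype.card_fin] using lt_of_le_of_ne hdeg hdn)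
      rw [hPeval]
      have key : ∀ j : Fin (n + 1),
          d j * ∏ k ∈ Finset.univ.erase j, (θ l + γ k)
            = (Real.exp (γ j * h) / (θ l + γ j) * v j) * ∏ k, (θ l + γ k) := by
        intro j
        rw [← Finset.mul_prod_erase _ _ (Finset.mem_univ j)]
        have e1 : Real.exp (γ j * h) / (θ l + γ j) * v j
            * ((θ l + γ j) * ∏ k ∈ Finset.univ.erase j, (θ l + γ k))
            = (Real.exp (γ j * h) / (θ l + γ j) * (θ l + γ j))
              * (v j * ∏ k ∈ Finset.univ.erase j, (θ l + γ k)) := by ring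
        rw [e1, div_mul_cancel₀ _ (hne l j), hd]
        ring
      rw [Finset.sum_congr rfl fun j _ => key j, ← Finset.sum_mul, hrow l, zero_mul]
  -- conclude each d j = 0
  have hdzero : ∀ j, d j = 0 := by
    intro j
    have h0 : P.eval (-γ j) = 0 := by rw [hP0]; simp
    rw [hPeval] at h0
    rw [Finset.sum_eq_single_of_mem j (Finset.mem_univ j)
      (fun j' _ hj' => by
        rw [Finset.prod_eq_zero (Finset.mem_erase.mpr ⟨hj'.symm, Finset.mem_univ j⟩)
          (by ring), mul_zero])] at h0
    have hprod : (∏ k ∈ Finset.univ.erase j, (-γ j + γ k)) ≠ 0 := by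
      refine Finset.prod_ne_zero_iff.mpr fun k hk => ?_
      intro hc
      exact (Finset.mem_erase.mp hk).1 (hγinj (by linarith))
    exact (mul_eq_zero.mp h0).resolve_right hprod
  apply hv0
  funext j
  have := hdzero j
  rw [hd] at this
  simpa [Real.exp_ne_zero] using (mul_eq_zero.mp this)
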